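/- arXiv:q-alg/9608016 — 2 statements merged into one kernel-verified Lean document; each statement's English description precedes it below -/
import Mathlib

section
/- Let G be a finite group and let L be a ℂ-subspace of the augmentation ideal of ℂ[G] that is invariant under conjugation by every h ∈ G and invariant under D_a for every function a : G → ℂ. Then there is a unique subset S ⊆ G \ {1} that is closed under conjugation such that L = span_ℂ{ x_g : g ∈ S }. -/
open MonoidAlgebra

noncomputable section

variable {G : Type*} [Group G] [Fintype G]

/-- The augmentation map `ε : ℂ[G] → ℂ`, the algebra map sending each group element to `1`. -/
def aug (G : Type*) [Group G] : MonoidAlgebra ℂ G →ₐ[ℂ] ℂ :=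
  MonoidAlgebra.lift ℂ ℂ G 1

/-- `x_g := g - 1` in the group algebra. -/
def xElt (g : G) : MonoidAlgebra ℂ G :=
  MonoidAlgebra.of ℂ G g - 1

/-- The linear endomorphism `D_a` of `ℂ[G]` with `D_a(g) = a(g)·g - a(g)·1` on basis elements. -/
def Dop (a : G → ℂ) : MonoidAlgebra ℂ G →ₗ[ℂ] MonoidAlgebra ℂ G :=
  (Finsupp.lsum ℂ fun g => LinearMap.toSpanSingleton ℂ _ (a g • xElt g)) ∘ₗ
    (MonoidAlgebra.coeffLinearEquiv ℂ).toLinearMap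

omit [Fintype G] in
lemma xElt_one : (xElt 1 : MonoidAlgebra ℂ G) = 0 := by
  simp [xElt, MonoidAlgebra.one_def]

omit [Fintype G] in
lemma xElt_apply_self (g : G) (hg : g ≠ 1) : (xElt g : MonoidAlgebra ℂ G).coeff g = 1 := by
  classical
  rw [xElt, MonoidAlgebra.one_def]
  rw [MonoidAlgebra.coeff_sub, Finsupp.sub_apply]
  simp [MonoidAlgebra.of_apply, Finsupp.single_apply, Ne.symm hg]

omit [Fintype G] in
lemma xElt_apply_ne (g h : G) (hg : g ≠ 1) (hne : h ≠ g) :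
    (xElt h : MonoidAlgebra ℂ G).coeff g = 0 := by
  classical
  rw [xElt, MonoidAlgebra.one_def, MonoidAlgebra.coeff_sub, Finsupp.sub_apply]
  simp [MonoidAlgebra.of_apply, Finsupp.single_apply, hne, Ne.symm hg]

omit [Fintype G] in
lemma Dop_apply (a : G → ℂ) (y : MonoidAlgebra ℂ G) :
    Dop a y = y.coeff.sum fun h c => c • (a h • xElt h) := by
  rfl

omit [Fintype G] in
lemma Dop_indicator (a : G → ℂ) (g : G) (hag : a g = 1) (ha : ∀ h, h ≠ g → a h = 0)
    (y : MonoidAlgebra ℂ G) : Dop a y = y.coeff g • xElt g := by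
  classical
  rw [Dop_apply]
  rw [Finsupp.sum_eq_single g]
  · rw [hag, one_smul]
  · intro b _ hb
    rw [ha b hb]
    simp
  · simp

omit [Fintype G] in
lemma conj_xElt (h g : G) :
    MonoidAlgebra.of ℂ G h * xElt g * MonoidAlgebra.of ℂ G h⁻¹ = xElt (h * g * h⁻¹) := by
  simp only [xElt, mul_sub, sub_mul, mul_one, one_mul, ← map_mul]
  rw [mul_inv_cancel]
  simp [MonoidAlgebra.one_def, mul_assoc]

omit [Fintype G] in
lemma aug_eq_sum (y : MonoidAlgebra ℂ G) : aug G y = ∑ g ∈ y.coeff.support, y.coeff g := by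
  rw [aug, MonoidAlgebra.lift_apply]
  simp [Finsupp.sum]

omit [Fintype G] in
lemma y_eq_sum (y : MonoidAlgebra ℂ G) (h0 : aug G y = 0) :
    y = ∑ g ∈ y.coeff.support, y.coeff g • xElt g := by
  have h1 : y = ∑ g ∈ y.coeff.support, y.coeff g • MonoidAlgebra.of ℂ G g := by
    conv_lhs => rw [← MonoidAlgebra.sum_coeff_single y]
    rw [Finsupp.sum]
    congr 1
    funext g
    rw [MonoidAlgebra.of_apply, MonoidAlgebra.smul_single, smul_eq_mul, mul_one]
  calc y = ∑ g ∈ y.coeff.support, y.coeff g • MonoidAlgebra.of ℂ G g := h1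
    _ = ∑ g ∈ y.coeff.support, y.coeff g • (xElt g + 1) := by simp [xElt]
    _ = (∑ g ∈ y.coeff.support, y.coeff g • xElt g) + (∑ g ∈ y.coeff.support, y.coeff g) • (1 : MonoidAlgebra ℂ G) := by
        simp [smul_add, Finset.sum_add_distrib, Finset.sum_smul]
    _ = ∑ g ∈ y.coeff.support, y.coeff g • xElt g := by
        rw [← aug_eq_sum, h0]; simp

omit [Fintype G] in
lemma coeff_zero_of_mem_span {S : Set G} {g : G} (hg : g ≠ 1) (hgS : g ∉ S)
    {y : MonoidAlgebra ℂ G} (hy : y ∈ Submodule.span ℂ (xElt '' S)) : y.coeff g = 0 := by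
  induction hy using Submodule.span_induction with
  | mem x hx =>
    obtain ⟨h, hh, rfl⟩ := hx
    exact xElt_apply_ne g h hg (by rintro rfl; exact hgS hh)
  | zero => simp
  | add u v _ _ hu hv => rw [MonoidAlgebra.coeff_add, Finsupp.add_apply, hu, hv, add_zero]
  | smul c u _ hu => rw [MonoidAlgebra.coeff_smul, Finsupp.smul_apply, hu, smul_zero]

theorem stmt1 (L : Submodule ℂ (MonoidAlgebra ℂ G))
    (haug : ∀ y ∈ L, aug G y = 0)
    (hconj : ∀ h : G, ∀ y ∈ L, MonoidAlgebra.of ℂ G h * y * MonoidAlgebra.of ℂ G h⁻¹ ∈ L)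
    (hD : ∀ a : G → ℂ, ∀ y ∈ L, Dop a y ∈ L) :
    ∃! S : Set G, S ⊆ {g : G | g ≠ 1} ∧ (∀ g ∈ S, ∀ h : G, h * g * h⁻¹ ∈ S) ∧
      L = Submodule.span ℂ (xElt '' S) := by
  classical
  refine ⟨{g : G | g ≠ 1 ∧ xElt g ∈ L}, ⟨fun g hg => hg.1, ?_, ?_⟩, ?_⟩
  · rintro g ⟨hg1, hgL⟩ h
    refine ⟨?_, ?_⟩
    · intro hc
      apply hg1
      have : g = h⁻¹ * (h * g * h⁻¹) * h := by group
      rw [this, hc]; group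
    · rw [← conj_xElt]
      exact hconj h _ hgL
  · apply le_antisymm
    · intro y hy
      rw [y_eq_sum y (haug y hy)]
      apply Submodule.sum_mem
      intro g hgsupp
      by_cases hg1 : g = 1
      · subst hg1; rw [xElt_one, smul_zero]; exact Submodule.zero_mem _
      · have hyg : y.coeff g ≠ 0 := Finsupp.mem_support_iff.mp hgsupp
        have hmem : y.coeff g • xElt g ∈ L := by
          have := hD (fun h => if h = g then (1:ℂ) else 0) y hy
          rwa [Dop_indicator _ g (by simp) (fun h hh => by simp [hh]) y] at this
        have hxg : xElt g ∈ L := by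
          have := L.smul_mem (y.coeff g)⁻¹ hmem
          rwa [inv_smul_smul₀ hyg] at this
        exact Submodule.smul_mem _ _ (Submodule.subset_span ⟨g, ⟨hg1, hxg⟩, rfl⟩)
    · rw [Submodule.span_le]
      rintro _ ⟨g, hgS, rfl⟩
      exact hgS.2
  · rintro S' ⟨hS1', _, hsp'⟩
    ext g
    constructor
    · intro hg
      refine ⟨hS1' hg, ?_⟩
      rw [hsp']
      exact Submodule.subset_span ⟨g, hg, rfl⟩
    · rintro ⟨hg1, hgL⟩
      by_contra hgS'
      have h0 := coeff_zero_of_mem_span hg1 hgS' (hsp' ▸ hgL)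
      rw [xElt_apply_self g hg1] at h0
      exact one_ne_zero h0

end
end

section
/- Let H be a Hopf algebra over a commutative ring and let c ∈ H be a central element. Then for every h ∈ H the following identity holds in H ⊗ H: Σ c₍₁₎ ⊗ h₍₁₎ c₍₂₎ S(h₍₂₎) = Σ S(h₍₁₎) c₍₁₎ h₍₂₎ ⊗ c₍₂₎. -/
open TensorProduct Coalgebra HopfAlgebra

noncomputable section

namespace Stmt13Aux

variable {R : Type*} {H : Type*} [CommRing R] [Ring H] [HopfAlgebra R H]


variable {R : Type*} {H : Type*} [CommRing R] [Ring H] [HopfAlgebra R H]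

lemma sum_counit_smul {ι : Type*} {v : H} (rv : Repr R v ι) :
    ∑ i ∈ rv.index, counit (R := R) (rv.left i) • rv.right i = v := by
  have := congrArg (TensorProduct.lid R H) (sum_counit_tmul_eq rv)
  simp only [map_sum, lid_tmul] at this
  simpa using this

lemma sum_smul_counit {ι : Type*} {v : H} (rv : Repr R v ι) :
    ∑ i ∈ rv.index, counit (R := R) (rv.right i) • rv.left i = v := by
  have := congrArg (TensorProduct.rid R H) (sum_tmul_counit_eq rv)
  simp only [map_sum, rid_tmul] at this
  simpa using this

/-- `Σ (S v₁ ⊗ 1) * Δ v₂ = 1 ⊗ v`. -/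
lemma lam {ι : Type*} {v : H} (rv : Repr R v ι) :
    ∑ i ∈ rv.index,
      (antipode (R := R) (rv.left i) ⊗ₜ[R] (1 : H)) * comul (R := R) (rv.right i)
      = (1 : H) ⊗ₜ[R] v := by
  let rl : ∀ i, Repr R (rv.left i) (H × H) := fun i => ℛ R (rv.left i)
  let rr : ∀ i, Repr R (rv.right i) (H × H) := fun i => ℛ R (rv.right i)
  let G' : H ⊗[R] (H ⊗[R] H) →ₗ[R] H ⊗[R] H :=
    LinearMap.rTensor H (LinearMap.mul' R H ∘ₗ LinearMap.rTensor H (antipode (R := R))) ∘ₗ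
      (TensorProduct.assoc R H H H).symm.toLinearMap
  have key := congrArg G' (sum_tmul_tmul_eq rv rl rr)
  simp only [map_sum, G', LinearMap.comp_apply, LinearEquiv.coe_coe, assoc_symm_tmul,
    LinearMap.rTensor_tmul, LinearMap.mul'_apply] at key
  -- key : ∑ i, ∑ j, (S ((rl i).left j) * (rl i).right j) ⊗ₜ rv.right i
  --     = ∑ i, ∑ j, (S (rv.left i) * (rr i).left j) ⊗ₜ (rr i).right j
  calc ∑ i ∈ rv.index,
      (antipode (R := R) (rv.left i) ⊗ₜ[R] (1 : H)) * comul (R := R) (rv.right i)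
      = ∑ i ∈ rv.index, ∑ j ∈ (rr i).index,
          (antipode (R := R) (rv.left i) * (rr i).left j) ⊗ₜ[R] (rr i).right j := by
        refine Finset.sum_congr rfl fun i _ => ?_
        rw [← (rr i).eq, Finset.mul_sum]
        simp [Algebra.TensorProduct.tmul_mul_tmul]
    _ = ∑ i ∈ rv.index, ∑ j ∈ (rl i).index,
          (antipode (R := R) ((rl i).left j) * (rl i).right j) ⊗ₜ[R] rv.right i := key.symm
    _ = ∑ i ∈ rv.index, (counit (R := R) (rv.left i) • (1 : H)) ⊗ₜ[R] rv.right i := by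
        refine Finset.sum_congr rfl fun i _ => ?_
        rw [← sum_tmul, sum_antipode_mul_eq_smul (rl i)]
    _ = (1 : H) ⊗ₜ[R] v := by
        have h1 : ∀ i, (counit (R := R) (rv.left i) • (1 : H)) ⊗ₜ[R] rv.right i
            = (1 : H) ⊗ₜ[R] (counit (R := R) (rv.left i) • rv.right i) := fun i => by
          rw [smul_tmul]
        rw [Finset.sum_congr rfl fun i _ => h1 i, ← tmul_sum, sum_counit_smul rv]

/-- `Σ Δ v₁ * (1 ⊗ S v₂) = v ⊗ 1`. -/
lemma zet {ι : Type*} {v : H} (rv : Repr R v ι) :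
    ∑ i ∈ rv.index,
      comul (R := R) (rv.left i) * ((1 : H) ⊗ₜ[R] antipode (R := R) (rv.right i))
      = v ⊗ₜ[R] (1 : H) := by
  let rl : ∀ i, Repr R (rv.left i) (H × H) := fun i => ℛ R (rv.left i)
  let rr : ∀ i, Repr R (rv.right i) (H × H) := fun i => ℛ R (rv.right i)
  let G : H ⊗[R] (H ⊗[R] H) →ₗ[R] H ⊗[R] H :=
    LinearMap.lTensor H (LinearMap.mul' R H ∘ₗ LinearMap.lTensor H (antipode (R := R)))
  have key := congrArg G (sum_tmul_tmul_eq rv rl rr)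
  simp only [map_sum, G, LinearMap.lTensor_tmul, LinearMap.comp_apply,
    LinearMap.mul'_apply] at key
  calc ∑ i ∈ rv.index,
      comul (R := R) (rv.left i) * ((1 : H) ⊗ₜ[R] antipode (R := R) (rv.right i))
      = ∑ i ∈ rv.index, ∑ j ∈ (rl i).index,
          (rl i).left j ⊗ₜ[R] ((rl i).right j * antipode (R := R) (rv.right i)) := by
        refine Finset.sum_congr rfl fun i _ => ?_
        rw [← (rl i).eq, Finset.sum_mul]
        simp [Algebra.TensorProduct.tmul_mul_tmul]
    _ = ∑ i ∈ rv.index, ∑ j ∈ (rr i).index,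
          rv.left i ⊗ₜ[R] ((rr i).left j * antipode (R := R) ((rr i).right j)) := key
    _ = ∑ i ∈ rv.index, rv.left i ⊗ₜ[R] (counit (R := R) (rv.right i) • (1 : H)) := by
        refine Finset.sum_congr rfl fun i _ => ?_
        rw [← tmul_sum, sum_mul_antipode_eq_smul (rr i)]
    _ = v ⊗ₜ[R] (1 : H) := by
        have h1 : ∀ i, rv.left i ⊗ₜ[R] (counit (R := R) (rv.right i) • (1 : H))
            = (counit (R := R) (rv.right i) • rv.left i) ⊗ₜ[R] (1 : H) := fun i => by
          rw [tmul_smul, smul_tmul']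
        rw [Finset.sum_congr rfl fun i _ => h1 i, ← sum_tmul, sum_smul_counit rv]


end Stmt13Aux

variable (R : Type*) (H : Type*) [CommRing R] [Ring H] [HopfAlgebra R H]

/-- The left adjoint action as a linear map `H ⊗ H → H`, `h ⊗ x ↦ Σ h₍₁₎ x S(h₍₂₎)`. -/
def adMap : H ⊗[R] H →ₗ[R] H :=
  LinearMap.mul' R H ∘ₗ
  LinearMap.lTensor H (LinearMap.mul' R H) ∘ₗ
  LinearMap.lTensor H (TensorProduct.comm R H H).toLinearMap ∘ₗ
  LinearMap.lTensor H (LinearMap.rTensor H (antipode (R := R))) ∘ₗ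
  (TensorProduct.assoc R H H H).toLinearMap ∘ₗ
  LinearMap.rTensor H (comul : H →ₗ[R] H ⊗[R] H)

/-- The "right-handed" adjoint-type map `H ⊗ H → H`, `h ⊗ x ↦ Σ S(h₍₁₎) x h₍₂₎`. -/
def adRMap : H ⊗[R] H →ₗ[R] H :=
  LinearMap.mul' R H ∘ₗ
  LinearMap.lTensor H (LinearMap.mul' R H) ∘ₗ
  LinearMap.rTensor (H ⊗[R] H) (antipode (R := R)) ∘ₗ
  LinearMap.lTensor H (TensorProduct.comm R H H).toLinearMap ∘ₗ
  (TensorProduct.assoc R H H H).toLinearMap ∘ₗ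
  LinearMap.rTensor H (comul : H →ₗ[R] H ⊗[R] H)

variable {R H}

/-- For `c` central and any `h`:
`Σ c₍₁₎ ⊗ h₍₁₎ c₍₂₎ S(h₍₂₎) = Σ S(h₍₁₎) c₍₁₎ h₍₂₎ ⊗ c₍₂₎` in `H ⊗ H`. -/
theorem stmt13 (c : H) (hc : ∀ x : H, c * x = x * c) (h : H) :
    LinearMap.lTensor H (adMap R H ∘ₗ TensorProduct.mk R H H h)
        ((comul : H →ₗ[R] H ⊗[R] H) c) =
    LinearMap.rTensor H (adRMap R H ∘ₗ TensorProduct.mk R H H h)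
        ((comul : H →ₗ[R] H ⊗[R] H) c) := by
  classical
  have hcomm : ∀ v : H, comul (R := R) c * comul v = comul v * comul c := fun v => by
    rw [← Bialgebra.comul_mul, ← Bialgebra.comul_mul, hc v]
  let rc := ℛ R c
  let rh := ℛ R h
  let rx : ∀ j, Repr R (rh.left j) (H × H) := fun j => ℛ R (rh.left j)
  let ry : ∀ j, Repr R (rh.right j) (H × H) := fun j => ℛ R (rh.right j)
  have adMapA : ∀ b : H, adMap R H (h ⊗ₜ[R] b)
      = ∑ j ∈ rh.index, rh.left j * (b * antipode (R := R) (rh.right j)) := by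
    intro b
    rw [adMap]
    simp only [LinearMap.comp_apply, LinearMap.rTensor_tmul]
    rw [← rh.eq]
    simp [sum_tmul, map_sum]
  have adRMapA : ∀ a : H, adRMap R H (h ⊗ₜ[R] a)
      = ∑ j ∈ rh.index, antipode (R := R) (rh.left j) * (a * rh.right j) := by
    intro a
    rw [adRMap]
    simp only [LinearMap.comp_apply, LinearMap.rTensor_tmul]
    rw [← rh.eq]
    simp [sum_tmul, map_sum]
  have hL : LinearMap.lTensor H (adMap R H ∘ₗ TensorProduct.mk R H H h)
        ((comul : H →ₗ[R] H ⊗[R] H) c)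
      = ∑ j ∈ rh.index, ((1 : H) ⊗ₜ[R] rh.left j) *
          (comul (R := R) c * ((1 : H) ⊗ₜ[R] antipode (R := R) (rh.right j))) := by
    rw [← rc.eq]
    simp only [map_sum, LinearMap.lTensor_tmul, LinearMap.comp_apply, mk_apply, adMapA,
      Finset.mul_sum, Finset.sum_mul, Algebra.TensorProduct.tmul_mul_tmul, one_mul, mul_one,
      tmul_sum]
    rw [Finset.sum_comm]
  have hR : LinearMap.rTensor H (adRMap R H ∘ₗ TensorProduct.mk R H H h)
        ((comul : H →ₗ[R] H ⊗[R] H) c)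
      = ∑ j ∈ rh.index, (antipode (R := R) (rh.left j) ⊗ₜ[R] (1 : H)) *
          (comul (R := R) c * (rh.right j ⊗ₜ[R] (1 : H))) := by
    rw [← rc.eq]
    simp only [map_sum, LinearMap.rTensor_tmul, LinearMap.comp_apply, mk_apply, adRMapA,
      Finset.mul_sum, Finset.sum_mul, Algebra.TensorProduct.tmul_mul_tmul, one_mul, mul_one,
      sum_tmul]
    rw [Finset.sum_comm]
  rw [hL, hR]
  symm
  let Θ : H ⊗[R] (H ⊗[R] H) →ₗ[R] H ⊗[R] H :=
    LinearMap.mul' R (H ⊗[R] H) ∘ₗ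
      TensorProduct.map
        (((TensorProduct.mk R H H).flip (1 : H)) ∘ₗ antipode (R := R))
        (LinearMap.mul' R (H ⊗[R] H) ∘ₗ
          TensorProduct.map
            (LinearMap.mulRight R (comul (R := R) c) ∘ₗ (comul : H →ₗ[R] H ⊗[R] H))
            ((TensorProduct.mk R H H (1 : H)) ∘ₗ antipode (R := R)))
  have ΘA : ∀ (u v w : H), Θ (u ⊗ₜ[R] (v ⊗ₜ[R] w))
      = (antipode (R := R) u ⊗ₜ[R] (1 : H)) *
          ((comul (R := R) v * comul (R := R) c) * ((1 : H) ⊗ₜ[R] antipode (R := R) w)) := by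
    intro u v w
    simp [Θ, LinearMap.mul'_apply, LinearMap.mulRight_apply]
  have key := congrArg Θ (sum_tmul_tmul_eq rh rx ry)
  simp only [map_sum, ΘA] at key
  calc ∑ j ∈ rh.index, (antipode (R := R) (rh.left j) ⊗ₜ[R] (1 : H)) *
          (comul (R := R) c * (rh.right j ⊗ₜ[R] (1 : H)))
      = ∑ j ∈ rh.index, ∑ k ∈ (ry j).index,
          (antipode (R := R) (rh.left j) ⊗ₜ[R] (1 : H)) *
            ((comul (R := R) ((ry j).left k) * comul (R := R) c) *
              ((1 : H) ⊗ₜ[R] antipode (R := R) ((ry j).right k))) := by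
        refine Finset.sum_congr rfl fun j _ => ?_
        conv_lhs => rw [← Stmt13Aux.zet (ry j)]
        rw [Finset.mul_sum, Finset.mul_sum]
        refine Finset.sum_congr rfl fun k _ => ?_
        rw [← mul_assoc (comul (R := R) c) (comul (R := R) ((ry j).left k)), hcomm]
    _ = ∑ j ∈ rh.index, ∑ k ∈ (rx j).index,
          (antipode (R := R) ((rx j).left k) ⊗ₜ[R] (1 : H)) *
            ((comul (R := R) ((rx j).right k) * comul (R := R) c) *
              ((1 : H) ⊗ₜ[R] antipode (R := R) (rh.right j))) := key.symm
    _ = ∑ j ∈ rh.index, ((1 : H) ⊗ₜ[R] rh.left j) *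
          (comul (R := R) c * ((1 : H) ⊗ₜ[R] antipode (R := R) (rh.right j))) := by
        refine Finset.sum_congr rfl fun j _ => ?_
        rw [← Stmt13Aux.lam (rx j), Finset.sum_mul]
        refine Finset.sum_congr rfl fun k _ => ?_
        simp only [mul_assoc]


end
end
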